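/- Let R be a commutative ring, u, v, u′, v′ ∈ R, and θ a unit of R with v − u = θ·(v′ − u′). Then the R-algebra homomorphism R[X] → R[X]/((X − u′)(X − v′)) determined by X ↦ θ·(X − u′) + u descends to an R-algebra isomorphism f : R[X]/((X − u)(X − v)) ≅ R[X]/((X − u′)(X − v′)), and f maps the colors as f(X − u) = θ·(X − u′) and f(X − v) = θ·(X − v′). -/

import Mathlib

open Polynomial

/-- Let `R` be a commutative ring, `u, v, u′, v′ ∈ R`, and `θ`
a unit of `R` with `v − u = θ·(v′ − u′)`. Then `X ↦ θ·(X − u′) + u` descends to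
an `R`-algebra isomorphism `f : R[X]/((X−u)(X−v)) ≅ R[X]/((X−u′)(X−v′))`, and
`f` maps the colors as `f(X − u) = θ·(X − u′)` and `f(X − v) = θ·(X − v′)`. -/
theorem stmt10 {R : Type*} [CommRing R] (u v u' v' θ : R) (hθ : IsUnit θ)
    (hc : v - u = θ * (v' - u')) :
    ∃ f : AdjoinRoot ((X - C u) * (X - C v)) ≃ₐ[R]
          AdjoinRoot ((X - C u') * (X - C v')),
      f (AdjoinRoot.root ((X - C u) * (X - C v))) =
          θ • AdjoinRoot.root ((X - C u') * (X - C v'))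
            - algebraMap R (AdjoinRoot ((X - C u') * (X - C v'))) (θ * u')
            + algebraMap R (AdjoinRoot ((X - C u') * (X - C v'))) u ∧
        f (AdjoinRoot.root ((X - C u) * (X - C v))
              - algebraMap R (AdjoinRoot ((X - C u) * (X - C v))) u) =
          θ • (AdjoinRoot.root ((X - C u') * (X - C v'))
              - algebraMap R (AdjoinRoot ((X - C u') * (X - C v'))) u') ∧
        f (AdjoinRoot.root ((X - C u) * (X - C v))
              - algebraMap R (AdjoinRoot ((X - C u) * (X - C v))) v) =
          θ • (AdjoinRoot.root ((X - C u') * (X - C v'))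
              - algebraMap R (AdjoinRoot ((X - C u') * (X - C v'))) v') := by
  set p : R[X] := (X - C u) * (X - C v) with hp
  set q : R[X] := (X - C u') * (X - C v') with hq
  set t : R := ↑hθ.unit⁻¹ with ht
  have htθ : t * θ = 1 := hθ.val_inv_mul
  have hc' : v' - u' = t * (v - u) := by
    rw [hc, ← mul_assoc, htθ, one_mul]
  set A := AdjoinRoot p
  set B := AdjoinRoot q
  set r : A := AdjoinRoot.root p
  set r' : B := AdjoinRoot.root q
  set cA : R →+* A := algebraMap R A with hcA
  set cB : R →+* B := algebraMap R B with hcB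
  set a : B := cB θ * (r' - cB u') + cB u with ha
  set b : A := cA t * (r - cA u) + cA u' with hb
  have hq0 : (r' - cB u') * (r' - cB v') = 0 := by
    have h : aeval r' q = 0 := by
      rw [AdjoinRoot.aeval_eq, AdjoinRoot.mk_self]
    simpa [hq, map_mul, map_sub, aeval_X, aeval_C] using h
  have hp0 : (r - cA u) * (r - cA v) = 0 := by
    have h : aeval r p = 0 := by
      rw [AdjoinRoot.aeval_eq, AdjoinRoot.mk_self]
    simpa [hp, map_mul, map_sub, aeval_X, aeval_C] using h
  have hcBc : cB v - cB u = cB θ * (cB v' - cB u') := by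
    rw [← map_sub, ← map_sub, ← map_mul, hc]
  have hcAc : cA v' - cA u' = cA t * (cA v - cA u) := by
    rw [← map_sub, ← map_sub, ← map_mul, hc']
  have e1 : a - cB u = cB θ * (r' - cB u') := by rw [ha]; ring
  have e2 : a - cB v = cB θ * (r' - cB v') := by
    rw [ha]; linear_combination -hcBc
  have e1' : b - cA u' = cA t * (r - cA u) := by rw [hb]; ring
  have e2' : b - cA v' = cA t * (r - cA v) := by
    rw [hb]; linear_combination -hcAc
  have hap : aeval a p = 0 := by
    have h : aeval a p = (a - cB u) * (a - cB v) := by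
      simp [hp, hcB, map_mul, map_sub, aeval_X, aeval_C]
    rw [h, e1, e2]
    calc cB θ * (r' - cB u') * (cB θ * (r' - cB v'))
        = cB θ * cB θ * ((r' - cB u') * (r' - cB v')) := by ring
      _ = 0 := by rw [hq0, mul_zero]
  have hbq : aeval b q = 0 := by
    have h : aeval b q = (b - cA u') * (b - cA v') := by
      simp [hq, hcA, map_mul, map_sub, aeval_X, aeval_C]
    rw [h, e1', e2']
    calc cA t * (r - cA u) * (cA t * (r - cA v))
        = cA t * cA t * ((r - cA u) * (r - cA v)) := by ring
      _ = 0 := by rw [hp0, mul_zero]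
  set φ : A →ₐ[R] B := AdjoinRoot.liftAlgHom p (Algebra.ofId R B) a hap with hφ
  set ψ : B →ₐ[R] A := AdjoinRoot.liftAlgHom q (Algebra.ofId R A) b hbq with hψ
  have hφr : φ r = a := AdjoinRoot.liftAlgHom_root ..
  have hψr : ψ r' = b := AdjoinRoot.liftAlgHom_root ..
  have hφc : ∀ x : R, φ (cA x) = cB x := fun x => φ.commutes x
  have hψc : ∀ x : R, ψ (cB x) = cA x := fun x => ψ.commutes x
  have h1 : φ.comp ψ = AlgHom.id R B := by
    apply AdjoinRoot.algHom_ext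
    show φ (ψ r') = r'
    rw [hψr, hb]
    simp only [map_add, map_mul, map_sub, hφc, hφr, ha]
    calc cB t * (cB θ * (r' - cB u') + cB u - cB u) + cB u'
        = cB (t * θ) * (r' - cB u') + cB u' := by rw [map_mul]; ring
      _ = r' := by rw [htθ, map_one]; ring
  have h2 : ψ.comp φ = AlgHom.id R A := by
    apply AdjoinRoot.algHom_ext
    show ψ (φ r) = r
    rw [hφr, ha]
    simp only [map_add, map_mul, map_sub, hψc, hψr, hb]
    calc cA θ * (cA t * (r - cA u) + cA u' - cA u') + cA u
        = cA (t * θ) * (r - cA u) + cA u := by rw [map_mul]; ring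
      _ = r := by rw [htθ, map_one]; ring
  refine ⟨AlgEquiv.ofAlgHom φ ψ h1 h2, ?_, ?_, ?_⟩
  · show φ r = θ • r' - cB (θ * u') + cB u
    rw [hφr, ha, Algebra.smul_def, map_mul]
    ring
  · show φ (r - cA u) = θ • (r' - cB u')
    rw [map_sub, hφr, hφc, Algebra.smul_def, ← e1]
  · show φ (r - cA v) = θ • (r' - cB v')
    rw [map_sub, hφr, hφc, Algebra.smul_def, ← e2]
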